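/- Let μ be a complex measure on 𝔻. The function w ↦ w·P_{μ̄}(w) belongs to the Bloch space ℬ if and only if sup_{w∈𝔻} |∫_𝔻 (1-|w|²)/(1 - w̄ z)² dμ(z)| < ∞. -/

import Mathlib

open MeasureTheory Complex Metric

/-- `f` belongs to the Bloch space of the unit disk. -/
def MemBloch (f : ℂ → ℂ) : Prop :=
  DifferentiableOn ℂ f (Metric.ball 0 1) ∧
    ∃ C : ℝ, ∀ z ∈ Metric.ball (0 : ℂ) 1, (1 - ‖z‖ ^ 2) * ‖deriv f z‖ ≤ C

lemma key_deriv (ν : Measure ℂ) [IsFiniteMeasure ν] (h : ℂ → ℂ)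
    (hsupp : ∀ᵐ z ∂ν, z ∈ Metric.ball (0 : ℂ) 1)
    (hint : Integrable h ν) {u₀ : ℂ} (hu₀ : u₀ ∈ Metric.ball (0 : ℂ) 1) :
    HasDerivAt (fun u : ℂ =>
        u * ∫ z, (1 - u * (starRingEnd ℂ) z)⁻¹ * (starRingEnd ℂ) (h z) ∂ν)
      (∫ z, ((1 - u₀ * (starRingEnd ℂ) z) ^ 2)⁻¹ * (starRingEnd ℂ) (h z) ∂ν) u₀ := by
  have hu₀n : ‖u₀‖ < 1 := mem_ball_zero_iff.mp hu₀
  set s : ℝ := (1 + ‖u₀‖) / 2 with hs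
  have hs1 : s < 1 := by rw [hs]; linarith
  have hs0 : 0 < 1 - s := by linarith
  have hsn : ‖u₀‖ < s := by rw [hs]; linarith [norm_nonneg u₀]
  set ε : ℝ := (1 - ‖u₀‖) / 2 with hε
  have hεpos : 0 < ε := by rw [hε]; linarith
  -- norm bound on the ball
  have hxs : ∀ x ∈ ball u₀ ε, ‖x‖ < s := by
    intro x hx
    have : ‖x - u₀‖ < ε := mem_ball_iff_norm.mp hx
    calc ‖x‖ = ‖x - u₀ + u₀‖ := by ring_nf
    _ ≤ ‖x - u₀‖ + ‖u₀‖ := norm_add_le _ _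
    _ < ε + ‖u₀‖ := by linarith
    _ = s := by rw [hε, hs]; ring
  have hkey : ∀ x : ℂ, ∀ a : ℂ, ‖x‖ < s → ‖a‖ < 1 → (1 - s ≤ ‖1 - x * (starRingEnd ℂ) a‖) := by
    intro x a hx ha
    have h1 : ‖x * (starRingEnd ℂ) a‖ ≤ s := by
      rw [norm_mul]
      have : ‖(starRingEnd ℂ) a‖ ≤ 1 := by rw [RCLike.norm_conj]; linarith
      calc ‖x‖ * ‖(starRingEnd ℂ) a‖ ≤ ‖x‖ * 1 := by
            exact mul_le_mul_of_nonneg_left this (norm_nonneg x)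
      _ ≤ s := by linarith
    calc 1 - s ≤ ‖(1 : ℂ)‖ - ‖x * (starRingEnd ℂ) a‖ := by
          rw [norm_one]; linarith
    _ ≤ ‖1 - x * (starRingEnd ℂ) a‖ := norm_sub_norm_le _ _
  have hne : ∀ x : ℂ, ∀ a : ℂ, ‖x‖ < s → ‖a‖ < 1 → (1 - x * (starRingEnd ℂ) a ≠ 0) := by
    intro x a hx ha
    have := hkey x a hx ha
    intro hc
    rw [hc, norm_zero] at this
    linarith
  -- the parametrized family
  set F : ℂ → ℂ → ℂ := fun x a => x * ((1 - x * (starRingEnd ℂ) a)⁻¹ * (starRingEnd ℂ) (h a))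
    with hF
  set F' : ℂ → ℂ → ℂ := fun x a => ((1 - x * (starRingEnd ℂ) a) ^ 2)⁻¹ * (starRingEnd ℂ) (h a)
    with hF'
  have hmeas : ∀ x : ℂ, AEStronglyMeasurable (F x) ν := by
    intro x
    apply AEStronglyMeasurable.const_mul
    exact (((measurable_const.sub (measurable_const.mul
      (RCLike.continuous_conj.measurable))).inv).aestronglyMeasurable).mul (RCLike.continuous_conj.comp_aestronglyMeasurable hint.1)
  have hmeas' : AEStronglyMeasurable (F' u₀) ν := by
    exact ((((measurable_const.sub (measurable_const.mul
      (RCLike.continuous_conj.measurable))).pow_const 2).inv).aestronglyMeasurable).mul (RCLike.continuous_conj.comp_aestronglyMeasurable hint.1)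
  have hF_int : Integrable (F u₀) ν := by
    apply (hint.norm.const_mul ((1 - s)⁻¹)).mono' (hmeas u₀)
    filter_upwards [hsupp] with a ha
    have ha1 : ‖a‖ < 1 := mem_ball_zero_iff.mp ha
    have hb := hkey u₀ a hsn ha1
    rw [hF]
    simp only [norm_mul, norm_inv, RCLike.norm_conj]
    have h1 : ‖1 - u₀ * (starRingEnd ℂ) a‖⁻¹ ≤ (1 - s)⁻¹ :=
      inv_anti₀ hs0 hb
    have h2 : ‖u₀‖ ≤ 1 := le_of_lt hu₀n
    calc ‖u₀‖ * (‖1 - u₀ * (starRingEnd ℂ) a‖⁻¹ * ‖h a‖)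
        ≤ 1 * ((1 - s)⁻¹ * ‖h a‖) := by
          apply mul_le_mul h2 _ (by positivity) zero_le_one
          exact mul_le_mul_of_nonneg_right h1 (norm_nonneg _)
    _ = (1 - s)⁻¹ * ‖h a‖ := one_mul _
  have hbound_int : Integrable (fun a => (1 - s)⁻¹ ^ 2 * ‖h a‖) ν :=
    hint.norm.const_mul _
  have h_bound : ∀ᵐ a ∂ν, ∀ x ∈ ball u₀ ε, ‖F' x a‖ ≤ (1 - s)⁻¹ ^ 2 * ‖h a‖ := by
    filter_upwards [hsupp] with a ha x hx
    have ha1 : ‖a‖ < 1 := mem_ball_zero_iff.mp ha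
    have hb := hkey x a (hxs x hx) ha1
    rw [hF']
    simp only [norm_mul, norm_inv, norm_pow, RCLike.norm_conj]
    apply mul_le_mul_of_nonneg_right _ (norm_nonneg _)
    rw [← inv_pow]
    apply pow_le_pow_left₀ (by positivity)
    exact inv_anti₀ hs0 hb
  have h_diff : ∀ᵐ a ∂ν, ∀ x ∈ ball u₀ ε, HasDerivAt (fun x => F x a) (F' x a) x := by
    filter_upwards [hsupp] with a ha x hx
    have ha1 : ‖a‖ < 1 := mem_ball_zero_iff.mp ha
    have hne0 : 1 - x * (starRingEnd ℂ) a ≠ 0 := hne x a (hxs x hx) ha1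
    set c : ℂ := (starRingEnd ℂ) a
    set q : ℂ := (starRingEnd ℂ) (h a)
    have hg : HasDerivAt (fun x : ℂ => 1 - x * c) (-c) x :=
      (hasDerivAt_mul_const c).const_sub 1
    have hinv : HasDerivAt (fun x : ℂ => (1 - x * c)⁻¹)
        (-(-c) / (1 - x * c) ^ 2) x := hg.inv hne0
    have hmul : HasDerivAt (fun x : ℂ => x * ((1 - x * c)⁻¹ * q))
        (1 * ((1 - x * c)⁻¹ * q) + x * ((-(-c) / (1 - x * c) ^ 2) * q)) x :=
      (hasDerivAt_id x).mul (hinv.mul_const q)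
    convert hmul using 1
    rw [hF']
    show ((1 - x * c) ^ 2)⁻¹ * q = _
    field_simp
    ring
  have hmain := hasDerivAt_integral_of_dominated_loc_of_deriv_le (ball_mem_nhds u₀ hεpos)
    (Filter.Eventually.of_forall hmeas) hF_int hmeas' h_bound hbound_int h_diff
  have heq : (fun u : ℂ =>
      u * ∫ z, (1 - u * (starRingEnd ℂ) z)⁻¹ * (starRingEnd ℂ) (h z) ∂ν)
      = fun x => ∫ a, F x a ∂ν := by
    funext x
    rw [hF]
    rw [integral_const_mul]
  rw [heq]
  exact hmain.2

theorem statement2 (ν : Measure ℂ) [IsFiniteMeasure ν] (h : ℂ → ℂ)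
    (hsupp : ∀ᵐ z ∂ν, z ∈ Metric.ball (0 : ℂ) 1)
    (hint : Integrable h ν) :
    MemBloch (fun u : ℂ =>
        u * ∫ z, (1 - u * (starRingEnd ℂ) z)⁻¹ * (starRingEnd ℂ) (h z) ∂ν)
      ↔ ∃ C : ℝ, ∀ w ∈ Metric.ball (0 : ℂ) 1,
          ‖∫ z, (((1 - ‖w‖ ^ 2 : ℝ) : ℂ) / (1 - (starRingEnd ℂ) w * z) ^ 2) * h z ∂ν‖ ≤ C := by
  set Φ : ℂ → ℂ := fun u : ℂ =>
    u * ∫ z, (1 - u * (starRingEnd ℂ) z)⁻¹ * (starRingEnd ℂ) (h z) ∂ν with hΦ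
  set D : ℂ → ℂ := fun w => ∫ z, ((1 - w * (starRingEnd ℂ) z) ^ 2)⁻¹ * (starRingEnd ℂ) (h z) ∂ν
    with hD
  have hderiv : ∀ w ∈ Metric.ball (0 : ℂ) 1, HasDerivAt Φ (D w) w := fun w hw =>
    key_deriv ν h hsupp hint hw
  have hderiv_eq : ∀ w ∈ Metric.ball (0 : ℂ) 1, deriv Φ w = D w := fun w hw =>
    (hderiv w hw).deriv
  -- norm identity
  have hnorm : ∀ w ∈ Metric.ball (0 : ℂ) 1,
      ‖∫ z, (((1 - ‖w‖ ^ 2 : ℝ) : ℂ) / (1 - (starRingEnd ℂ) w * z) ^ 2) * h z ∂ν‖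
        = (1 - ‖w‖ ^ 2) * ‖D w‖ := by
    intro w hw
    have hw1 : ‖w‖ < 1 := mem_ball_zero_iff.mp hw
    have hpt : ∀ z : ℂ, (((1 - ‖w‖ ^ 2 : ℝ) : ℂ) / (1 - (starRingEnd ℂ) w * z) ^ 2) * h z
        = ((1 - ‖w‖ ^ 2 : ℝ) : ℂ) *
          (starRingEnd ℂ) (((1 - w * (starRingEnd ℂ) z) ^ 2)⁻¹ * (starRingEnd ℂ) (h z)) := by
      intro z
      simp only [map_mul, map_inv₀, map_pow, map_sub, map_one, Complex.conj_conj]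
      rw [div_eq_mul_inv, mul_assoc]
    have : (∫ z, (((1 - ‖w‖ ^ 2 : ℝ) : ℂ) / (1 - (starRingEnd ℂ) w * z) ^ 2) * h z ∂ν)
        = ((1 - ‖w‖ ^ 2 : ℝ) : ℂ) * (starRingEnd ℂ) (D w) := by
      simp_rw [hpt]
      rw [integral_const_mul, hD, ← integral_conj]
    rw [this, norm_mul, Complex.norm_real, RCLike.norm_conj]
    congr 1
    rw [Real.norm_of_nonneg]
    nlinarith [norm_nonneg w]
  constructor
  · rintro ⟨-, C, hC⟩
    refine ⟨C, fun w hw => ?_⟩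
    rw [hnorm w hw]
    have := hC w hw
    rwa [hderiv_eq w hw] at this
  · rintro ⟨C, hC⟩
    constructor
    · intro w hw
      exact ((hderiv w hw).differentiableAt).differentiableWithinAt
    · refine ⟨C, fun w hw => ?_⟩
      rw [hderiv_eq w hw, ← hnorm w hw]
      exact hC w hw
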